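/- For the map F(x,y) = (y, (a - y + y^2)/x) with invariant conics C_h = {x^2 + y^2 - x - y + a - h x y = 0}, and the parametrization P_h(t) with components P_{1,h}(t) = (2δt - ah^2 - (1+δ)h - 2 + 4a)/(2(-t^2 + ht - 1)) + a and P_{2,h}(t) = ((-ah + δ - 1)t^2 + (4a - 2)t - ah - δ - 1)/(2(-t^2 + ht - 1)), where δ^2 = (ah+1)^2 - 4a^2, one has the identity F(P_h(t)) = P_h(((h+1)t - 1)/(t + 1)) for all t where both sides are defined. -/

import Mathlib

set_option maxHeartbeats 1000000 in
/-- For `F(x,y) = (y, (a-y+y²)/x)` and the parametrization `P_h` of the invariant conic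
`C_h`, one has `F(P_h(t)) = P_h(((h+1)t-1)/(t+1))` wherever both sides are defined. -/
theorem BR_parametrization_moebius (a h : ℝ) (ha : a > 1 / 4)
    (hd : (a * h + 1) ^ 2 - 4 * a ^ 2 ≥ 0) :
    let δ : ℝ := Real.sqrt ((a * h + 1) ^ 2 - 4 * a ^ 2)
    let P1 : ℝ → ℝ := fun t =>
      (2 * δ * t - a * h ^ 2 - (1 + δ) * h - 2 + 4 * a) / (2 * (-t ^ 2 + h * t - 1)) + a
    let P2 : ℝ → ℝ := fun t =>
      ((-a * h + δ - 1) * t ^ 2 + (4 * a - 2) * t - a * h - δ - 1) /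
        (2 * (-t ^ 2 + h * t - 1))
    ∀ t : ℝ, -t ^ 2 + h * t - 1 ≠ 0 → t + 1 ≠ 0 →
      -(((h + 1) * t - 1) / (t + 1)) ^ 2 + h * (((h + 1) * t - 1) / (t + 1)) - 1 ≠ 0 →
      P1 t ≠ 0 →
      ((P2 t, (a - P2 t + (P2 t) ^ 2) / (P1 t)) : ℝ × ℝ) =
        (P1 (((h + 1) * t - 1) / (t + 1)), P2 (((h + 1) * t - 1) / (t + 1))) := by
  intro δ P1 P2 t h1 h2 h3 h4
  have hδ2 : δ ^ 2 = (a * h + 1) ^ 2 - 4 * a ^ 2 := Real.sq_sqrt hd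
  set s : ℝ := ((h + 1) * t - 1) / (t + 1) with hs
  -- numerator of Q(s) after clearing (t+1)^2
  set Qs : ℝ := -((h + 1) * t - 1) ^ 2 + h * (((h + 1) * t - 1) * (t + 1)) - (t + 1) ^ 2
    with hQs
  have hQs_eq : -s ^ 2 + h * s - 1 = Qs / (t + 1) ^ 2 := by
    rw [hs, hQs]; field_simp
  have hQsne : Qs ≠ 0 := by
    intro h0
    apply h3
    rw [hQs_eq, h0, zero_div]
  have hQ : (2 : ℝ) * (-t ^ 2 + h * t - 1) ≠ 0 := by
    intro h0
    exact h1 (by linarith [h0])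
  -- numerators over common denominator 2*(-t^2+h*t-1)
  set A : ℝ := 2 * δ * t - a * h ^ 2 - (1 + δ) * h - 2 + 4 * a
    + 2 * a * (-t ^ 2 + h * t - 1) with hA
  set B : ℝ := (-a * h + δ - 1) * t ^ 2 + (4 * a - 2) * t - a * h - δ - 1 with hB
  have hP1t : P1 t = A / (2 * (-t ^ 2 + h * t - 1)) := by
    show _ + a = _
    rw [hA]
    rw [div_add' _ _ _ hQ]
    ring
  have hAne : A ≠ 0 := by
    intro h0
    apply h4
    rw [hP1t, h0, zero_div]
  -- P1 at s, cleared of (t+1)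
  set As : ℝ := 2 * δ * (((h + 1) * t - 1) * (t + 1))
      - (a * h ^ 2 + (1 + δ) * h + 2 - 4 * a) * (t + 1) ^ 2 + 2 * a * Qs with hAs
  set Bs : ℝ := (-a * h + δ - 1) * ((h + 1) * t - 1) ^ 2
      + (4 * a - 2) * (((h + 1) * t - 1) * (t + 1)) - (a * h + δ + 1) * (t + 1) ^ 2 with hBs
  have hP1s : P1 s = As / (2 * Qs) := by
    show _ + a = _
    rw [hQs_eq]
    rw [div_add' _ _ _ (by exact mul_ne_zero two_ne_zero (div_ne_zero hQsne (pow_ne_zero 2 h2)))]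
    rw [div_eq_div_iff (mul_ne_zero two_ne_zero (div_ne_zero hQsne (pow_ne_zero 2 h2)))
      (mul_ne_zero two_ne_zero hQsne)]
    rw [hs, hAs, hQs]
    field_simp
    ring
  have hP2s : P2 s = Bs / (2 * Qs) := by
    show _ / _ = _
    rw [hQs_eq]
    rw [div_eq_div_iff (mul_ne_zero two_ne_zero (div_ne_zero hQsne (pow_ne_zero 2 h2)))
      (mul_ne_zero two_ne_zero hQsne)]
    rw [hs, hBs, hQs]
    field_simp
    ring
  have hP2t : P2 t = B / (2 * (-t ^ 2 + h * t - 1)) := rfl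
  refine Prod.ext ?_ ?_
  · -- first component : P2 t = P1 s
    show P2 t = P1 s
    rw [hP2t, hP1s, div_eq_div_iff hQ (mul_ne_zero two_ne_zero hQsne)]
    rw [hB, hAs, hQs]
    ring
  · -- second component
    show (a - P2 t + (P2 t) ^ 2) / (P1 t) = P2 s
    rw [hP2t, hP1t, hP2s]
    have hLHS : (a - B / (2 * (-t ^ 2 + h * t - 1)) + (B / (2 * (-t ^ 2 + h * t - 1))) ^ 2)
        / (A / (2 * (-t ^ 2 + h * t - 1)))
        = (4 * a * (-t ^ 2 + h * t - 1) ^ 2 - 2 * B * (-t ^ 2 + h * t - 1) + B ^ 2)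
          / (2 * (-t ^ 2 + h * t - 1) * A) := by
      generalize hq : -t ^ 2 + h * t - 1 = q at h1 ⊢
      field_simp
      ring
    rw [hLHS, div_eq_div_iff (mul_ne_zero hQ hAne) (mul_ne_zero two_ne_zero hQsne)]
    rw [hB, hBs, hA, hQs]
    linear_combination ((-4:ℝ) + (-12)*t^2 + (-12)*t^4 + (-4)*t^6 + (-2)*h + 12*h*t
      + (-6)*h*t^2 + 24*h*t^3 + (-6)*h*t^4 + 12*h*t^5 + (-2)*h*t^6 + 6*h^2*t
      + (-12)*h^2*t^2 + 12*h^2*t^3 + (-12)*h^2*t^4 + 6*h^2*t^5 + (-6)*h^3*t^2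
      + 4*h^3*t^3 + (-6)*h^3*t^4 + 2*h^4*t^3) * hδ2
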